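/- Let X be a topological group and H a countable subgroup of the automorphism group of X (automorphisms being group isomorphisms that are homeomorphisms) such that for every neighborhood U of the identity, X = ⋃_{h ∈ H} h(U). Then the semidirect product X ⋊ H (with H discrete) is duoseparable. -/

import Mathlib

open Pointwise

theorem stmt4 (X : Type*) [Group X] [TopologicalSpace X] [IsTopologicalGroup X]
    (H : Subgroup (MulAut X)) (hcount : (H : Set (MulAut X)).Countable)
    (hcont : ∀ h ∈ H, Continuous ⇑h)
    (habs : ∀ U ∈ nhds (1 : X), (⋃ h ∈ H, ⇑h '' U) = Set.univ) :
    ∃ S : Set (X ⋊[H.subtype] H), S.Countable ∧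
      ∀ U ∈ @nhds _ (TopologicalSpace.induced
          (fun p : X ⋊[H.subtype] H => (p.left, p.right))
          (@instTopologicalSpaceProd X H _ ⊥)) 1,
        S * U * S = Set.univ := by
  letI : TopologicalSpace H := ⊥
  haveI : Countable H := hcount.to_subtype
  refine ⟨Set.range (fun h : H => (⟨1, h⟩ : X ⋊[H.subtype] H)),
    Set.countable_range _, ?_⟩
  intro U hU
  rw [mem_nhds_induced] at hU
  obtain ⟨W, hW, hWU⟩ := hU
  simp only [SemidirectProduct.one_left, SemidirectProduct.one_right] at hW
  rw [nhds_prod_eq, Filter.mem_prod_iff] at hW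
  obtain ⟨V, hV, T, hT, hVT⟩ := hW
  have h1T : (1 : H) ∈ T := by
    exact mem_of_mem_nhds hT
  apply Set.eq_univ_of_forall
  rintro ⟨x, g⟩
  have hx : x ∈ ⋃ h ∈ H, ⇑h '' V := by rw [habs V hV]; trivial
  simp only [Set.mem_iUnion, Set.mem_image] at hx
  obtain ⟨h, hH, v, hv, hhv⟩ := hx
  have hmem : (⟨v, 1⟩ : X ⋊[H.subtype] H) ∈ U := by
    apply hWU
    exact hVT ⟨hv, h1T⟩
  have key : (⟨x, g⟩ : X ⋊[H.subtype] H) =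
      (⟨1, ⟨h, hH⟩⟩ : X ⋊[H.subtype] H) * ⟨v, 1⟩ * ⟨1, ⟨h, hH⟩⁻¹ * g⟩ := by
    ext <;> simp [SemidirectProduct.mul_left, SemidirectProduct.mul_right, hhv]
  rw [key]
  exact Set.mul_mem_mul (Set.mul_mem_mul ⟨⟨h, hH⟩, rfl⟩ hmem) ⟨_, rfl⟩
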